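/- For v₁, v₂ ∈ ℝⁿ and r > 0, the Lebesgue volume of the open r-neighborhood of the segment [v₁, v₂] equals ωₙ rⁿ + |v₂ - v₁| · ω_{n-1} r^{n-1}, where ω_k is the volume of the k-dimensional Euclidean unit ball. -/

import Mathlib

open MeasureTheory

noncomputable def unitBallVolume (k : ℕ) : ENNReal :=
  volume (Metric.ball (0 : EuclideanSpace ℝ (Fin k)) 1)

lemma volBall (k : ℕ) (x : EuclideanSpace ℝ (Fin k)) {ρ : ℝ} (hρ : 0 < ρ) :
    volume (Metric.ball x ρ) = unitBallVolume k * ENNReal.ofReal (ρ ^ k) := by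
  cases k with
  | zero =>
    have h1 : Metric.ball x ρ = Set.univ := by
      ext y; simp [Metric.mem_ball, Subsingleton.elim y x, hρ]
    have h2 : Metric.ball (0 : EuclideanSpace ℝ (Fin 0)) 1 = Set.univ := by
      ext y; simp [Metric.mem_ball, Subsingleton.elim y (0 : EuclideanSpace ℝ (Fin 0))]
    simp [unitBallVolume, h1, h2]
  | succ m =>
    rw [Measure.addHaar_ball volume x hρ.le, unitBallVolume, mul_comm,
      finrank_euclideanSpace_fin]

lemma key2 {L r t cy : ℝ} (hL : 0 ≤ L) :
    (∃ s ∈ Set.Icc (0:ℝ) L, (t - s)^2 + cy < r^2) ↔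
      (cy < r^2 ∧ -(Real.sqrt (r^2 - cy)) < t ∧ t < L + Real.sqrt (r^2 - cy)) := by
  rcases lt_or_ge cy (r^2) with h | h
  · set w := Real.sqrt (r^2 - cy) with hw_def
    have hw : 0 < w := Real.sqrt_pos.2 (by linarith)
    have hw2 : w^2 = r^2 - cy := Real.sq_sqrt (by linarith)
    simp only [h, true_and]
    constructor
    · rintro ⟨s, ⟨hs0, hsL⟩, hs⟩
      constructor
      · nlinarith [sq_nonneg (t - s + w)]
      · nlinarith [sq_nonneg (t - s - w)]
    · rintro ⟨h1, h2⟩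
      rcases le_total t 0 with ht | ht
      · exact ⟨0, ⟨le_refl 0, hL⟩, by nlinarith⟩
      · rcases le_total t L with htL | htL
        · exact ⟨t, ⟨ht, htL⟩, by nlinarith⟩
        · exact ⟨L, ⟨hL, le_refl L⟩, by nlinarith⟩
  · constructor
    · rintro ⟨s, _, hs⟩
      exact absurd hs (by nlinarith [sq_nonneg (t - s)])
    · rintro ⟨h1, _⟩; linarith

lemma key2' {r t cy : ℝ} :
    (t^2 + cy < r^2) ↔
      (cy < r^2 ∧ -(Real.sqrt (r^2 - cy)) < t ∧ t < Real.sqrt (r^2 - cy)) := by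
  have := key2 (L := 0) (r := r) (t := t) (cy := cy) le_rfl
  simpa using this

set_option maxHeartbeats 2000000 in
theorem stmt4 (n : ℕ) (v₁ v₂ : EuclideanSpace ℝ (Fin n)) (r : ℝ) (hr : 0 < r) :
    volume (Metric.thickening r (segment ℝ v₁ v₂))
      = unitBallVolume n * ENNReal.ofReal (r ^ n)
        + ENNReal.ofReal (dist v₁ v₂) * unitBallVolume (n - 1)
          * ENNReal.ofReal (r ^ (n - 1)) := by
  rcases eq_or_ne v₁ v₂ with rfl | hne
  · rw [segment_same, Metric.thickening_singleton, volBall n v₁ hr]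
    simp
  · obtain ⟨m, rfl⟩ : ∃ m, n = m + 1 := by
      cases n with
      | zero => exact absurd (Subsingleton.elim v₁ v₂) hne
      | succ m => exact ⟨m, rfl⟩
    set L : ℝ := dist v₁ v₂ with hLdef
    have hL : 0 < L := dist_pos.2 hne
    set u : EuclideanSpace ℝ (Fin (m + 1)) := L⁻¹ • (v₂ - v₁) with hu_def
    have hnv : ‖v₂ - v₁‖ = L := by rw [← dist_eq_norm, dist_comm]
    have hu : ‖u‖ = 1 := by
      rw [hu_def, norm_smul, hnv, norm_inv, Real.norm_eq_abs, abs_of_pos hL,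
        inv_mul_cancel₀ hL.ne']
    have hLu : L • u = v₂ - v₁ := by
      rw [hu_def, smul_smul, mul_inv_cancel₀ hL.ne', one_smul]
    set e : EuclideanSpace ℝ (Fin (m + 1)) := EuclideanSpace.single (0 : Fin (m + 1)) (1 : ℝ) with he_def
    have he : ‖e‖ = 1 := by rw [he_def, EuclideanSpace.norm_single, norm_one]
    set f : EuclideanSpace ℝ (Fin (m + 1)) ≃ₗᵢ[ℝ] EuclideanSpace ℝ (Fin (m + 1)) := Submodule.reflection (ℝ ∙ (u - e))ᗮ with hf_def
    have hf : f u = e := Submodule.reflection_sub (hu.trans he.symm)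
    -- coordinates
    set c : (Fin m → ℝ) → ℝ := fun y => ∑ j, (y j) ^ 2 with hc_def
    set w : (Fin m → ℝ) → ℝ := fun y => Real.sqrt (r ^ 2 - c y) with hw_def
    have hcm : Measurable c := by
      apply Finset.measurable_sum
      intro j _
      exact (measurable_pi_apply j).pow_const 2
    have hwm : Measurable w := (measurable_const.sub hcm).sqrt
    set C : Set (Fin m → ℝ) := {y | c y < r ^ 2} with hC_def
    have hC : MeasurableSet C := measurableSet_lt hcm measurable_const
    set A : Set (ℝ × (Fin m → ℝ)) :=
      {p | c p.2 < r ^ 2 ∧ -(w p.2) < p.1 ∧ p.1 < L + w p.2} with hA_def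
    set B : Set (ℝ × (Fin m → ℝ)) :=
      {p | c p.2 < r ^ 2 ∧ -(w p.2) < p.1 ∧ p.1 < w p.2} with hB_def
    have hcm2 : Measurable fun p : ℝ × (Fin m → ℝ) => c p.2 := hcm.comp measurable_snd
    have hwm2 : Measurable fun p : ℝ × (Fin m → ℝ) => w p.2 := hwm.comp measurable_snd
    have hA : MeasurableSet A :=
      (measurableSet_lt hcm2 measurable_const).inter
        ((measurableSet_lt hwm2.neg measurable_fst).inter
          (measurableSet_lt measurable_fst (measurable_const.add hwm2)))
    have hB : MeasurableSet B :=
      (measurableSet_lt hcm2 measurable_const).inter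
        ((measurableSet_lt hwm2.neg measurable_fst).inter
          (measurableSet_lt measurable_fst hwm2))
    -- the measure preserving maps
    set ψ := (MeasurableEquiv.toLp 2 (Fin (m + 1) → ℝ)).symm
    set π := MeasurableEquiv.piFinSuccAbove (fun _ : Fin (m + 1) => ℝ) 0
    set ψm := (MeasurableEquiv.toLp 2 (Fin m → ℝ)).symm
    set Φ : EuclideanSpace ℝ (Fin (m + 1)) → ℝ × (Fin m → ℝ) := fun x => π (ψ x) with hΦ_def
    have hΦ : MeasurePreserving Φ volume volume :=
      (volume_preserving_piFinSuccAbove (fun _ : Fin (m + 1) => ℝ) 0).comp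
        (EuclideanSpace.volume_preserving_symm_measurableEquiv_toLp (Fin (m + 1)))
    set G : EuclideanSpace ℝ (Fin (m + 1)) → ℝ × (Fin m → ℝ) := fun x => Φ (f (x - v₁)) with hG_def
    have hG : MeasurePreserving G volume volume :=
      (hΦ.comp f.measurePreserving).comp (measurePreserving_sub_right volume v₁)
    -- coordinate description of Φ
    have hΦ_eq : ∀ z : EuclideanSpace ℝ (Fin (m + 1)), Φ z = (z 0, fun j => z j.succ) := by
      intro z
      rfl
    have hfsub : ∀ a b : EuclideanSpace ℝ (Fin (m + 1)), f (a - b) = f a - f b :=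
      fun a b => map_sub f a b
    have hfsm : ∀ (s : ℝ) (x : EuclideanSpace ℝ (Fin (m + 1))), f (s • x) = s • f x :=
      fun s x => map_smul f s x
    -- membership computations
    have hsum : ∀ z : EuclideanSpace ℝ (Fin (m + 1)), ∀ s : ℝ, dist z (s • e) ^ 2
        = (z 0 - s) ^ 2 + c (fun j => z j.succ) := by
      intro z s
      rw [EuclideanSpace.dist_eq, Real.sq_sqrt (by positivity)]
      rw [Fin.sum_univ_succ]
      congr 1
      · have : (s • e) 0 = s := by
          simp [he_def, PiLp.smul_apply, EuclideanSpace.single_apply]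
        rw [Real.dist_eq, sq_abs, this]
      · rw [hc_def]
        apply Finset.sum_congr rfl
        intro j _
        have : (s • e) j.succ = 0 := by
          simp [he_def, PiLp.smul_apply, EuclideanSpace.single_apply, Fin.succ_ne_zero]
        rw [Real.dist_eq, sq_abs, this, sub_zero]
    have hdistlt : ∀ z : EuclideanSpace ℝ (Fin (m + 1)), ∀ s : ℝ, (dist z (s • e) < r ↔
        (z 0 - s) ^ 2 + c (fun j => z j.succ) < r ^ 2) := by
      intro z s
      rw [← hsum z s]
      constructor
      · intro h; nlinarith [dist_nonneg (x := z) (y := s • e)]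
      · intro h; nlinarith [dist_nonneg (x := z) (y := s • e)]
    -- S = G ⁻¹' A
    have hSA : Metric.thickening r (segment ℝ v₁ v₂) = G ⁻¹' A := by
      ext x
      rw [Set.mem_preimage, Metric.mem_thickening_iff, segment_eq_image']
      set z : EuclideanSpace ℝ (Fin (m + 1)) := f (x - v₁) with hz_def
      have hGx : G x = (z 0, fun j => z j.succ) := hΦ_eq z
      have step1 : (∃ p ∈ (fun θ : ℝ => v₁ + θ • (v₂ - v₁)) '' Set.Icc 0 1,
          dist x p < r) ↔ ∃ s ∈ Set.Icc (0:ℝ) L, (z 0 - s) ^ 2 + c (fun j => z j.succ) < r ^ 2 := by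
        constructor
        · rintro ⟨p, ⟨θ, hθ, rfl⟩, hp⟩
          refine ⟨θ * L, ⟨mul_nonneg hθ.1 hL.le, by nlinarith [hθ.2]⟩, ?_⟩
          rw [← hdistlt]
          have : x - (v₁ + θ • (v₂ - v₁)) = (x - v₁) - (θ * L) • u := by
            rw [mul_smul, hLu]; abel
          calc dist z ((θ * L) • e) = ‖z - (θ * L) • e‖ := dist_eq_norm _ _
            _ = ‖f ((x - v₁) - (θ * L) • u)‖ := by
                rw [hz_def]; congr 1
                rw [hfsub (x - v₁) ((θ * L) • u), hfsm (θ * L) u, hf]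
            _ = ‖(x - v₁) - (θ * L) • u‖ := f.norm_map _
            _ = dist x (v₁ + θ • (v₂ - v₁)) := by rw [← this, ← dist_eq_norm]
            _ < r := hp
        · rintro ⟨s, ⟨hs0, hsL⟩, hs⟩
          refine ⟨v₁ + (s / L) • (v₂ - v₁), ⟨s / L, ⟨div_nonneg hs0 hL.le,
            (div_le_one hL).2 hsL⟩, rfl⟩, ?_⟩
          rw [← hdistlt] at hs
          have hsl : (s / L) * L = s := div_mul_cancel₀ s hL.ne'
          have : x - (v₁ + (s / L) • (v₂ - v₁)) = (x - v₁) - s • u := by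
            rw [← hLu, smul_smul, hsl]; abel
          calc dist x (v₁ + (s / L) • (v₂ - v₁)) = ‖(x - v₁) - s • u‖ := by
                rw [← this, ← dist_eq_norm]
            _ = ‖f ((x - v₁) - s • u)‖ := (f.norm_map _).symm
            _ = ‖z - s • e‖ := by
                rw [hz_def]; congr 1
                rw [hfsub (x - v₁) (s • u), hfsm s u, hf]
            _ = dist z (s • e) := (dist_eq_norm _ _).symm
            _ < r := hs
      rw [step1, key2 hL.le]
      rw [hA_def]
      simp only [Set.mem_setOf_eq, hGx, hw_def]
    have hvolS : volume (Metric.thickening r (segment ℝ v₁ v₂)) = volume A := by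
      rw [hSA, hG.measure_preimage hA.nullMeasurableSet]
    -- ball = Φ ⁻¹' B
    have hSB : Metric.ball (0 : EuclideanSpace ℝ (Fin (m + 1))) r = Φ ⁻¹' B := by
      ext z
      rw [Set.mem_preimage, Metric.mem_ball]
      have hz : dist z 0 < r ↔ (z 0) ^ 2 + c (fun j => z j.succ) < r ^ 2 := by
        have := hdistlt z 0
        simpa using this
      rw [hz, key2', hB_def]
      simp only [Set.mem_setOf_eq, hΦ_eq z, hw_def]
    have hvolB : volume B = unitBallVolume (m + 1) * ENNReal.ofReal (r ^ (m + 1)) := by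
      rw [← hΦ.measure_preimage hB.nullMeasurableSet, ← hSB, volBall _ _ hr]
    -- ball = ψm ⁻¹' C
    have hSC : Metric.ball (0 : EuclideanSpace ℝ (Fin m)) r = ψm ⁻¹' C := by
      ext y
      rw [Set.mem_preimage, Metric.mem_ball, EuclideanSpace.dist_eq]
      rw [Real.sqrt_lt' hr]
      have : ∀ i, dist (y i) ((0 : EuclideanSpace ℝ (Fin m)) i) ^ 2 = (y i) ^ 2 := by
        intro i; simp [Real.dist_eq, sq_abs]
      rw [Finset.sum_congr rfl fun i _ => this i]
      rfl
    have hvolC : volume C = unitBallVolume m * ENNReal.ofReal (r ^ m) := by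
      rw [← (EuclideanSpace.volume_preserving_symm_measurableEquiv_toLp (Fin m)).measure_preimage
        hC.nullMeasurableSet, ← hSC, volBall _ _ hr]
    -- slicing
    have hwnn : ∀ y, 0 ≤ w y := fun y => Real.sqrt_nonneg _
    have sliceA : ∀ y : Fin m → ℝ, volume ((fun t => (t, y)) ⁻¹' A)
        = C.indicator (fun y => ENNReal.ofReal (2 * w y)) y
          + C.indicator (fun _ => ENNReal.ofReal L) y := by
      intro y
      by_cases hy : c y < r ^ 2
      · have : (fun t => (t, y)) ⁻¹' A = Set.Ioo (-(w y)) (L + w y) := by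
          ext t; simp [hA_def, hy, and_comm]
        rw [this, Real.volume_Ioo, Set.indicator_of_mem (show y ∈ C from hy), Set.indicator_of_mem (show y ∈ C from hy),
          ← ENNReal.ofReal_add (by linarith [hwnn y]) hL.le]
        ring_nf
      · have : (fun t => (t, y)) ⁻¹' A = ∅ := by
          ext t; simp [hA_def, hy]
        rw [this, Set.indicator_of_notMem (show y ∉ C from hy), Set.indicator_of_notMem (show y ∉ C from hy)]
        simp
    have sliceB : ∀ y : Fin m → ℝ, volume ((fun t => (t, y)) ⁻¹' B)
        = C.indicator (fun y => ENNReal.ofReal (2 * w y)) y := by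
      intro y
      by_cases hy : c y < r ^ 2
      · have : (fun t => (t, y)) ⁻¹' B = Set.Ioo (-(w y)) (w y) := by
          ext t; simp [hB_def, hy, and_comm]
        rw [this, Real.volume_Ioo, Set.indicator_of_mem (show y ∈ C from hy)]
        ring_nf
      · have : (fun t => (t, y)) ⁻¹' B = ∅ := by
          ext t; simp [hB_def, hy]
        rw [this, Set.indicator_of_notMem (show y ∉ C from hy)]
        simp
    have hFm : Measurable (C.indicator fun y => ENNReal.ofReal (2 * w y)) :=
      ((measurable_const.mul hwm).ennreal_ofReal).indicator hC
    have hvolA : volume A = volume B + ENNReal.ofReal L * volume C := by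
      rw [Measure.volume_eq_prod, Measure.prod_apply_symm hA, Measure.prod_apply_symm hB]
      calc ∫⁻ y, volume ((fun t => (t, y)) ⁻¹' A)
          = ∫⁻ y, (C.indicator (fun y => ENNReal.ofReal (2 * w y)) y
            + C.indicator (fun _ => ENNReal.ofReal L) y) := by
            exact lintegral_congr sliceA
        _ = (∫⁻ y, C.indicator (fun y => ENNReal.ofReal (2 * w y)) y)
            + ∫⁻ y, C.indicator (fun _ => ENNReal.ofReal L) y :=
            lintegral_add_left hFm _
        _ = (∫⁻ y, volume ((fun t => (t, y)) ⁻¹' B)) + ENNReal.ofReal L * volume C := by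
            rw [lintegral_indicator_const hC]
            congr 1
            exact (lintegral_congr sliceB).symm
    -- final assembly
    rw [hvolS, hvolA, hvolB, hvolC]
    simp only [Nat.add_sub_cancel]
    ring
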